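/- (Equivalence) Let p > K ≥ 1, let Σ_x be a symmetric positive definite p×p real matrix, and let Σ_xy be a symmetric positive semidefinite p×p real matrix of rank K admitting the decomposition Σ_xy = U D Uᵀ, where U ∈ ℝ^{p×K} has orthonormal columns and D is a K×K diagonal matrix with strictly positive diagonal entries. Let W = (w₁, …, w_K) ∈ ℝ^{p×K} be such that for each k = 1, …, K, the column w_k satisfies w_kᵀ Σ_x w_k = 1 and w_kᵀ Σ_x w_j = 0 for all j < k, and w_k maximizes w ↦ wᵀ Σ_xy w over { w ∈ ℝ^p : wᵀ Σ_x w = 1, wᵀ Σ_x w_j = 0 for j < k }. Let V* := Σ_x^{-1} U. Then the linear span of the columns of V* equals the linear span of the columns of W. -/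

import Mathlib

open Matrix Module Submodule

/-- Theorem 1, Equivalence: let `Σ_xy = U D Uᵀ` be positive semidefinite
of rank `K < p` with `U` having orthonormal columns and `D` diagonal with strictly
positive diagonal entries. If the columns `ws 1, …, ws K` are the sequential supervised
principal component directions (generalized Rayleigh quotient maximizers with
`Σ_x`-orthonormality constraints), then the span of the columns of `V* = Σ_x⁻¹ U`
equals the span of `ws 1, …, ws K`. -/
theorem stmt10
    (p K : ℕ) (hK : 1 ≤ K) (hpK : K < p)
    (Sx Sxy : Matrix (Fin p) (Fin p) ℝ) (hSx : Sx.PosDef)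
    (hSxy : Sxy.PosSemidef) (hrank : Sxy.rank = K)
    (U : Matrix (Fin p) (Fin K) ℝ) (hUorth : Uᵀ * U = 1)
    (d : Fin K → ℝ) (hd : ∀ k, 0 < d k)
    (hdecomp : Sxy = U * Matrix.diagonal d * Uᵀ)
    (ws : Fin K → (Fin p → ℝ))
    (hnorm : ∀ k, ws k ⬝ᵥ Sx *ᵥ ws k = 1)
    (horth : ∀ k j : Fin K, j < k → ws k ⬝ᵥ Sx *ᵥ ws j = 0)
    (hmax : ∀ k : Fin K, ∀ w : Fin p → ℝ,
      w ⬝ᵥ Sx *ᵥ w = 1 → (∀ j : Fin K, j < k → w ⬝ᵥ Sx *ᵥ ws j = 0) →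
        w ⬝ᵥ Sxy *ᵥ w ≤ ws k ⬝ᵥ Sxy *ᵥ ws k) :
    Submodule.span ℝ (Set.range (fun k : Fin K => (Sx⁻¹ * U)ᵀ k))
      = Submodule.span ℝ (Set.range ws) := by
  classical
  -- basic matrix facts
  have hSxt : Sxᵀ = Sx := by
    have := hSx.isHermitian
    exact (Matrix.conjTranspose_eq_transpose_of_trivial Sx).symm.trans this
  have hdet : IsUnit Sx.det := hSx.det_pos.ne'.isUnit
  have hSxinv : Sx⁻¹ * Sx = 1 := Matrix.nonsing_inv_mul _ hdet
  have hSxinv' : Sx * Sx⁻¹ = 1 := Matrix.mul_nonsing_inv _ hdet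
  have hq : ∀ u : Fin p → ℝ, u ≠ 0 → 0 < u ⬝ᵥ Sx *ᵥ u := by
    intro u hu
    simpa using hSx.dotProduct_mulVec_pos hu
  have hsymm : ∀ x y : Fin p → ℝ, x ⬝ᵥ Sx *ᵥ y = y ⬝ᵥ Sx *ᵥ x := by
    intro x y
    rw [Matrix.dotProduct_mulVec, ← Matrix.mulVec_transpose, hSxt, dotProduct_comm]
  set c : Fin K → (Fin p → ℝ) := fun k : Fin K => (Sx⁻¹ * U)ᵀ k with hc
  have h1 : ∀ (j : Fin K) (w : Fin p → ℝ), c j ⬝ᵥ Sx *ᵥ w = (Uᵀ *ᵥ w) j := by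
    intro j w
    have : c j ⬝ᵥ Sx *ᵥ w = ((Sx⁻¹ * U)ᵀ *ᵥ (Sx *ᵥ w)) j := rfl
    rw [this, Matrix.transpose_mul, Matrix.transpose_nonsing_inv, hSxt,
      Matrix.mulVec_mulVec, Matrix.mul_assoc, hSxinv, Matrix.mul_one]
  have h2 : ∀ w : Fin p → ℝ, w ⬝ᵥ Sxy *ᵥ w = ∑ j, d j * ((Uᵀ *ᵥ w) j)^2 := by
    intro w
    rw [hdecomp]
    have e1 : (U * Matrix.diagonal d * Uᵀ) *ᵥ w
        = U *ᵥ (Matrix.diagonal d *ᵥ (Uᵀ *ᵥ w)) := by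
      rw [Matrix.mulVec_mulVec, Matrix.mulVec_mulVec]
    rw [e1, Matrix.dotProduct_mulVec, ← Matrix.mulVec_transpose]
    simp only [Matrix.mulVec_diagonal, dotProduct]
    refine Finset.sum_congr rfl fun j _ => by ring
  have hsc : ∀ (M : Matrix (Fin p) (Fin p) ℝ) (t : ℝ) (w : Fin p → ℝ),
      (t • w) ⬝ᵥ M *ᵥ (t • w) = t^2 * (w ⬝ᵥ M *ᵥ w) := by
    intro M t w
    rw [Matrix.mulVec_smul, smul_dotProduct, dotProduct_smul]
    simp [smul_eq_mul]; ring
  have hfnonneg : ∀ w : Fin p → ℝ, 0 ≤ w ⬝ᵥ Sxy *ᵥ w := by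
    intro w; rw [h2]
    exact Finset.sum_nonneg fun j _ => mul_nonneg (hd j).le (sq_nonneg _)
  -- normalization lemma
  have hnormlem : ∀ u : Fin p → ℝ, u ≠ 0 → ∃ t : ℝ,
      ((t • u) ⬝ᵥ Sx *ᵥ (t • u) = 1) ∧
      (∀ v : Fin p → ℝ, (t • u) ⬝ᵥ Sx *ᵥ v = t * (u ⬝ᵥ Sx *ᵥ v)) ∧
      ((t • u) ⬝ᵥ Sxy *ᵥ (t • u) = (u ⬝ᵥ Sx *ᵥ u)⁻¹ * (u ⬝ᵥ Sxy *ᵥ u)) := by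
    intro u hu
    have hqu := hq u hu
    refine ⟨(Real.sqrt (u ⬝ᵥ Sx *ᵥ u))⁻¹, ?_, ?_, ?_⟩
    · rw [hsc]
      rw [← Real.sqrt_inv]
      rw [Real.sq_sqrt (by positivity)]
      field_simp
    · intro v
      rw [smul_dotProduct]; simp [smul_eq_mul]
    · rw [hsc, ← Real.sqrt_inv, Real.sq_sqrt (by positivity)]
  set S : Submodule ℝ (Fin p → ℝ) := Submodule.span ℝ (Set.range c) with hS
  have hcS : ∀ j, c j ∈ S := fun j => Submodule.subset_span ⟨j, rfl⟩
  -- vectors annihilated by Uᵀ are Sx-orthogonal to S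
  have hSperp : ∀ b : Fin p → ℝ, Uᵀ *ᵥ b = 0 → ∀ x ∈ S, x ⬝ᵥ Sx *ᵥ b = 0 := by
    intro b hb x hx
    induction hx using Submodule.span_induction with
    | mem x hx =>
      obtain ⟨j, rfl⟩ := hx
      rw [h1, hb]
      rfl
    | zero => rw [zero_dotProduct]
    | add x y _ _ hx hy => rw [add_dotProduct, hx, hy, add_zero]
    | smul t x _ hx => rw [smul_dotProduct, hx, smul_zero]
  -- the quadratic form w ↦ wᵀ Sxy w is positive on S \ {0}
  have hfpos : ∀ u : Fin p → ℝ, u ∈ S → u ≠ 0 → 0 < u ⬝ᵥ Sxy *ᵥ u := by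
    intro u huS hu
    rcases (hfnonneg u).lt_or_eq with h | h
    · exact h
    · exfalso
      have hz : ∀ j, d j * ((Uᵀ *ᵥ u) j)^2 = 0 := by
        have := (Finset.sum_eq_zero_iff_of_nonneg
          (fun j _ => mul_nonneg (hd j).le (sq_nonneg ((Uᵀ *ᵥ u) j)))).mp
          (by rw [← h2 u, ← h])
        exact fun j => this j (Finset.mem_univ j)
      have hU0 : Uᵀ *ᵥ u = 0 := by
        funext j
        have h2' := (mul_eq_zero.mp (hz j)).resolve_left (hd j).ne'
        simpa using pow_eq_zero_iff (n := 2) (by norm_num) |>.mp h2'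
      have : u ⬝ᵥ Sx *ᵥ u = 0 := hSperp u hU0 u huS
      exact (hq u hu).ne' this
  -- expansion of mulVec as linear combination of the columns c
  have hmv : ∀ y : Fin K → ℝ, (Sx⁻¹ * U) *ᵥ y = ∑ j, y j • c j := by
    intro y
    funext i
    rw [Finset.sum_apply]
    simp only [Pi.smul_apply, smul_eq_mul, hc, Matrix.transpose_apply]
    simp [Matrix.mulVec, dotProduct, mul_comm]
  -- linear independence of c and dimension of S
  have hlinc : LinearIndependent ℝ c := by
    rw [Fintype.linearIndependent_iff]
    intro g hg
    have hsum : (Sx⁻¹ * U) *ᵥ g = 0 := by rw [hmv]; exact hg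
    have hUg : U *ᵥ g = 0 := by
      have : Sx *ᵥ ((Sx⁻¹ * U) *ᵥ g) = 0 := by rw [hsum, Matrix.mulVec_zero]
      rwa [Matrix.mulVec_mulVec, ← Matrix.mul_assoc, hSxinv', Matrix.one_mul] at this
    have : (Uᵀ * U) *ᵥ g = 0 := by rw [← Matrix.mulVec_mulVec, hUg, Matrix.mulVec_zero]
    rw [hUorth, Matrix.one_mulVec] at this
    intro i; exact congrFun this i
  have hdimS : finrank ℝ S = K := by
    rw [hS, finrank_span_eq_card hlinc, Fintype.card_fin]
  -- the Gram matrix G = Uᵀ Sx⁻¹ U is invertible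
  set G : Matrix (Fin K) (Fin K) ℝ := Uᵀ * Sx⁻¹ * U with hG
  have hSxinvPD : (Sx⁻¹).PosDef := hSx.inv
  have hUinj : ∀ x : Fin K → ℝ, U *ᵥ x = 0 → x = 0 := by
    intro x hx
    have : (Uᵀ * U) *ᵥ x = 0 := by rw [← Matrix.mulVec_mulVec, hx, Matrix.mulVec_zero]
    rwa [hUorth, Matrix.one_mulVec] at this
  have hGPD : G.PosDef := by
    refine Matrix.PosDef.of_dotProduct_mulVec_pos ?_ ?_
    · show Gᴴ = G
      rw [Matrix.conjTranspose_eq_transpose_of_trivial, hG, Matrix.transpose_mul,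
        Matrix.transpose_mul, Matrix.transpose_transpose, Matrix.transpose_nonsing_inv,
        hSxt, Matrix.mul_assoc]
    · intro x hx
      have hUx : U *ᵥ x ≠ 0 := fun h => hx (hUinj x h)
      have eG : G *ᵥ x = Uᵀ *ᵥ (Sx⁻¹ *ᵥ (U *ᵥ x)) := by
        rw [Matrix.mulVec_mulVec, Matrix.mulVec_mulVec, ← hG]
      have e : (star x) ⬝ᵥ G *ᵥ x = (U *ᵥ x) ⬝ᵥ Sx⁻¹ *ᵥ (U *ᵥ x) := by
        have hstar : (star x : Fin K → ℝ) = x := by simp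
        rw [hstar, eG, Matrix.dotProduct_mulVec, Matrix.vecMul_transpose]
      rw [e]
      simpa using hSxinvPD.dotProduct_mulVec_pos hUx
  have hGdet : IsUnit G.det := hGPD.det_pos.ne'.isUnit
  have hGinv : G * G⁻¹ = 1 := Matrix.mul_nonsing_inv _ hGdet
  have hfindim : FiniteDimensional ℝ (Fin p → ℝ) := by infer_instance
  -- the inductive step
  have step : ∀ k : Fin K, (∀ j : Fin K, j < k → ws j ∈ S) → ws k ∈ S := by
    intro k ih
    -- a nonzero vector of S that is Sx-orthogonal to the previous ws
    have hexu : ∃ u : Fin p → ℝ, u ∈ S ∧ u ≠ 0 ∧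
        ∀ j : Fin K, j < k → u ⬝ᵥ Sx *ᵥ ws j = 0 := by
      set L : (Fin p → ℝ) →ₗ[ℝ] (Fin k.val → ℝ) :=
        { toFun := fun u => fun j => u ⬝ᵥ Sx *ᵥ ws ⟨j.1, j.2.trans k.isLt⟩
          map_add' := by
            intro x y; funext j; simp [add_dotProduct]
          map_smul' := by
            intro t x; funext j; simp [smul_dotProduct] } with hL
      have hker : LinearMap.ker (L.domRestrict S) ≠ ⊥ := by
        intro hbot
        have hinj : Function.Injective (L.domRestrict S) :=
          LinearMap.ker_eq_bot.mp hbot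
        have := LinearMap.finrank_le_finrank_of_injective hinj
        rw [hdimS, Module.finrank_fin_fun] at this
        have hkK : k.val < K := k.isLt
        omega
      obtain ⟨w, hwker, hwne⟩ := Submodule.exists_mem_ne_zero_of_ne_bot hker
      refine ⟨(w : Fin p → ℝ), w.2, ?_, ?_⟩
      · intro h
        exact hwne (Subtype.ext h)
      · intro j hj
        have h0 : L.domRestrict S w = 0 := LinearMap.mem_ker.mp hwker
        have := congrFun (show L (w : Fin p → ℝ) = 0 from h0) ⟨j.1, hj⟩
        exact this
    obtain ⟨u, huS, hune, huort⟩ := hexu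
    -- the maximum is positive
    have hfmaxpos : 0 < ws k ⬝ᵥ Sxy *ᵥ ws k := by
      obtain ⟨t, ht1, ht2, ht3⟩ := hnormlem u hune
      have hcon : ∀ j : Fin K, j < k → (t • u) ⬝ᵥ Sx *ᵥ ws j = 0 := by
        intro j hj; rw [ht2, huort j hj, mul_zero]
      have := hmax k (t • u) ht1 hcon
      rw [ht3] at this
      have hfu : 0 < (u ⬝ᵥ Sx *ᵥ u)⁻¹ * (u ⬝ᵥ Sxy *ᵥ u) :=
        mul_pos (inv_pos.mpr (hq u hune)) (hfpos u huS hune)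
      linarith
    -- decompose ws k = a + b with a ∈ S and Uᵀ b = 0
    set a : Fin p → ℝ := (Sx⁻¹ * U) *ᵥ (G⁻¹ *ᵥ (Uᵀ *ᵥ ws k)) with ha
    set b : Fin p → ℝ := ws k - a with hb
    have hab : ws k = a + b := by rw [hb]; abel
    have haS : a ∈ S := by
      rw [ha, hmv]
      exact Submodule.sum_mem _ fun j _ => Submodule.smul_mem _ _ (hcS j)
    have hUa : Uᵀ *ᵥ a = Uᵀ *ᵥ ws k := by
      have e1 : Uᵀ *ᵥ a = (Uᵀ * (Sx⁻¹ * U) * G⁻¹) *ᵥ (Uᵀ *ᵥ ws k) := by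
        rw [ha, Matrix.mulVec_mulVec, Matrix.mulVec_mulVec]
      have e2 : Uᵀ * (Sx⁻¹ * U) * G⁻¹ = 1 := by
        rw [← Matrix.mul_assoc, ← hG]
        exact hGinv
      rw [e1, e2, Matrix.one_mulVec]
    have hUb : Uᵀ *ᵥ b = 0 := by
      rw [hb, Matrix.mulVec_sub, hUa, sub_self]
    have hfva : ws k ⬝ᵥ Sxy *ᵥ ws k = a ⬝ᵥ Sxy *ᵥ a := by
      rw [hab, h2, h2]
      congr 1
      rw [Matrix.mulVec_add, hUb, add_zero]
    by_cases hbz : b = 0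
    · rw [hab, hbz, add_zero]; exact haS
    exfalso
    have hbb : 0 < b ⬝ᵥ Sx *ᵥ b := hq b hbz
    have hab0 : a ⬝ᵥ Sx *ᵥ b = 0 := hSperp b hUb a haS
    have hba0 : b ⬝ᵥ Sx *ᵥ a = 0 := by rw [hsymm]; exact hab0
    have hsum1 : a ⬝ᵥ Sx *ᵥ a + b ⬝ᵥ Sx *ᵥ b = 1 := by
      have := hnorm k
      rw [hab, Matrix.mulVec_add, dotProduct_add, add_dotProduct,
        add_dotProduct, hab0, hba0] at this
      linarith
    have ha0 : a ≠ 0 := by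
      intro h
      rw [h] at hfva
      rw [zero_dotProduct] at hfva
      rw [hfva] at hfmaxpos
      exact lt_irrefl 0 hfmaxpos
    have hα : 0 < a ⬝ᵥ Sx *ᵥ a := hq a ha0
    have hαlt : a ⬝ᵥ Sx *ᵥ a < 1 := by linarith
    have haort : ∀ j : Fin K, j < k → a ⬝ᵥ Sx *ᵥ ws j = 0 := by
      intro j hj
      have hbj : b ⬝ᵥ Sx *ᵥ ws j = 0 := by
        rw [hsymm]; exact hSperp b hUb (ws j) (ih j hj)
      have := horth k j hj
      rw [hab, add_dotProduct, hbj, add_zero] at this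
      exact this
    obtain ⟨t, ht1, ht2, ht3⟩ := hnormlem a ha0
    have hcon : ∀ j : Fin K, j < k → (t • a) ⬝ᵥ Sx *ᵥ ws j = 0 := by
      intro j hj; rw [ht2, haort j hj, mul_zero]
    have hle := hmax k (t • a) ht1 hcon
    rw [ht3, ← hfva] at hle
    set F := ws k ⬝ᵥ Sxy *ᵥ ws k with hF
    set α := a ⬝ᵥ Sx *ᵥ a with hα2
    have h5 : F ≤ α * F := by
      calc F = α * (α⁻¹ * F) := by field_simp
        _ ≤ α * F := mul_le_mul_of_nonneg_left hle hα.le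
    have h6 : α * F < 1 * F := mul_lt_mul_of_pos_right hαlt hfmaxpos
    rw [one_mul] at h6
    linarith
  -- all ws k are in S
  have hwsS : ∀ k : Fin K, ws k ∈ S := by
    have main : ∀ n : ℕ, ∀ k : Fin K, k.val < n → ws k ∈ S := by
      intro n
      induction n with
      | zero => intro k hk; omega
      | succ n ihn =>
        intro k hk
        exact step k fun j hj => ihn j (by omega)
    exact fun k => main (k.val + 1) k (Nat.lt_succ_self _)
  -- span ws = S
  have hss : Submodule.span ℝ (Set.range ws) ≤ S := by
    rw [Submodule.span_le]
    rintro _ ⟨k, rfl⟩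
    exact hwsS k
  have hlinws : LinearIndependent ℝ ws := by
    rw [Fintype.linearIndependent_iff]
    intro g hg j
    set L : (Fin p → ℝ) →ₗ[ℝ] ℝ :=
      { toFun := fun x => ws j ⬝ᵥ Sx *ᵥ x
        map_add' := by
          intro x y; simp [Matrix.mulVec_add, dotProduct_add]
        map_smul' := by
          intro t x; simp [Matrix.mulVec_smul, dotProduct_smul] } with hLd
    have h0 : L (∑ i, g i • ws i) = 0 := by rw [hg]; simp
    rw [map_sum] at h0
    have : ∀ i, L (g i • ws i) = if i = j then g i else 0 := by
      intro i
      rw [L.map_smul]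
      by_cases hij : i = j
      · subst hij
        simp [hLd, hnorm i]
      · rcases lt_or_gt_of_ne hij with h | h
        · have : ws j ⬝ᵥ Sx *ᵥ ws i = 0 := horth j i h
          simp [hLd, this, hij]
        · have : ws j ⬝ᵥ Sx *ᵥ ws i = 0 := by rw [hsymm]; exact horth i j h
          simp [hLd, this, hij]
    rw [Finset.sum_congr rfl fun i _ => this i] at h0
    simpa using h0
  have hdimW : finrank ℝ (Submodule.span ℝ (Set.range ws)) = K := by
    rw [finrank_span_eq_card hlinws, Fintype.card_fin]
  exact (Submodule.eq_of_le_of_finrank_eq hss (hdimW.trans hdimS.symm)).symm
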